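/- Let p, q, r be distinct odd primes. Define α_p = min{q⁻¹(p), r⁻¹(p), p - q⁻¹(p), p - r⁻¹(p)} and similarly α_q, α_r (with inverses taken in {1,...,modulus-1}). Then α_p·α_q·(r - 2α_r) + α_q·α_r·(p - 2α_p) + α_r·α_p·(q - 2α_q) ≥ (p-1)/2 + (q-1)/2 + (r-1)/2. -/
import Mathlib


/-- For distinct odd primes `p, q, r`, with `α_p = min{q⁻¹(p), r⁻¹(p), p-q⁻¹(p), p-r⁻¹(p)}`
and similarly `α_q, α_r`, we have
`α_p α_q (r-2α_r) + α_q α_r (p-2α_p) + α_r α_p (q-2α_q) ≥ (p-1)/2 + (q-1)/2 + (r-1)/2`. -/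
theorem stmt8 (p q r : ℤ) (hp : Prime p) (hq : Prime q) (hr : Prime r)
    (hpo : Odd p) (hqo : Odd q) (hro : Odd r)
    (hpq : p ≠ q) (hqr : q ≠ r) (hrp : r ≠ p)
    (iqp irp irq ipq ipr iqr : ℤ)
    (hiqp : 1 ≤ iqp ∧ iqp ≤ p - 1 ∧ q * iqp ≡ 1 [ZMOD p])
    (hirp : 1 ≤ irp ∧ irp ≤ p - 1 ∧ r * irp ≡ 1 [ZMOD p])
    (hirq : 1 ≤ irq ∧ irq ≤ q - 1 ∧ r * irq ≡ 1 [ZMOD q])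
    (hipq : 1 ≤ ipq ∧ ipq ≤ q - 1 ∧ p * ipq ≡ 1 [ZMOD q])
    (hipr : 1 ≤ ipr ∧ ipr ≤ r - 1 ∧ p * ipr ≡ 1 [ZMOD r])
    (hiqr : 1 ≤ iqr ∧ iqr ≤ r - 1 ∧ q * iqr ≡ 1 [ZMOD r]) :
    let αp := min (min iqp irp) (min (p - iqp) (p - irp))
    let αq := min (min irq ipq) (min (q - irq) (q - ipq))
    let αr := min (min ipr iqr) (min (r - ipr) (r - iqr))
    ((αp * αq * (r - 2 * αr) + αq * αr * (p - 2 * αp) + αr * αp * (q - 2 * αq) : ℤ) : ℚ)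
      ≥ ((p : ℚ) - 1) / 2 + ((q : ℚ) - 1) / 2 + ((r : ℚ) - 1) / 2 := by
  intro αp αq αr
  obtain ⟨kp, hkp⟩ := hpo
  obtain ⟨kq, hkq⟩ := hqo
  obtain ⟨kr, hkr⟩ := hro
  obtain ⟨h1, h2, -⟩ := hiqp
  obtain ⟨h3, h4, -⟩ := hirp
  obtain ⟨h5, h6, -⟩ := hirq
  obtain ⟨h7, h8, -⟩ := hipq
  obtain ⟨h9, h10, -⟩ := hipr
  obtain ⟨h11, h12, -⟩ := hiqr
  have hap1 : 1 ≤ αp := by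
    simp only [αp, le_min_iff]; omega
  have haq1 : 1 ≤ αq := by
    simp only [αq, le_min_iff]; omega
  have har1 : 1 ≤ αr := by
    simp only [αr, le_min_iff]; omega
  have hap2 : 2 * αp ≤ p - 1 := by
    have e1 : αp ≤ iqp := le_trans (min_le_left _ _) (min_le_left _ _)
    have e2 : αp ≤ p - iqp := le_trans (min_le_right _ _) (min_le_left _ _)
    omega
  have haq2 : 2 * αq ≤ q - 1 := by
    have e1 : αq ≤ irq := le_trans (min_le_left _ _) (min_le_left _ _)
    have e2 : αq ≤ q - irq := le_trans (min_le_right _ _) (min_le_left _ _)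
    omega
  have har2 : 2 * αr ≤ r - 1 := by
    have e1 : αr ≤ ipr := le_trans (min_le_left _ _) (min_le_left _ _)
    have e2 : αr ≤ r - ipr := le_trans (min_le_right _ _) (min_le_left _ _)
    omega
  have key : p + q + r - 3 ≤
      2 * (αp * αq * (r - 2 * αr) + αq * αr * (p - 2 * αp) + αr * αp * (q - 2 * αq)) := by
    have t1 : 0 ≤ (r - 1 - 2 * αr) * (2 * (αp * αq) - 1) :=
      mul_nonneg (by linarith) (by nlinarith)
    have t2 : 0 ≤ (p - 1 - 2 * αp) * (2 * (αq * αr) - 1) :=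
      mul_nonneg (by linarith) (by nlinarith)
    have t3 : 0 ≤ (q - 1 - 2 * αq) * (2 * (αr * αp) - 1) :=
      mul_nonneg (by linarith) (by nlinarith)
    have t4 : 0 ≤ αp * (αq - 1) := mul_nonneg (by linarith) (by linarith)
    have t5 : 0 ≤ αq * (αr - 1) := mul_nonneg (by linarith) (by linarith)
    have t6 : 0 ≤ αr * (αp - 1) := mul_nonneg (by linarith) (by linarith)
    nlinarith [t1, t2, t3, t4, t5, t6]
  rw [ge_iff_le]
  have key2 : ((p + q + r - 3 : ℤ) : ℚ) ≤
      ((2 * (αp * αq * (r - 2 * αr) + αq * αr * (p - 2 * αp) + αr * αp * (q - 2 * αq)) : ℤ) : ℚ) := by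
    exact_mod_cast key
  push_cast at key2 ⊢
  linarith
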